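/- For all real α, β > −1 and all fixed i, k ∈ ℕ with i ≤ k, lim_{n→∞} (P_{n−i}^{(α+2i,β)})^{(k−i)}(1) / (P_n^{(α,β)})^{(k)}(1) = 2^i·Γ(α+k+1)/Γ(α+i+k+1). -/

import Mathlib

open Polynomial Filter
open Finset Topology

/-- The Jacobi polynomial `P_n^{(α,β)}` as a real polynomial. -/
noncomputable def jacobiP (α β : ℝ) (n : ℕ) : Polynomial ℝ :=
  ∑ k ∈ Finset.range (n + 1),
    Polynomial.C (Real.Gamma (n + α + 1) / (Real.Gamma ((n : ℝ) - k + 1) * Real.Gamma (α + k + 1)) *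
        (Real.Gamma (n + β + 1) / (Real.Gamma ((k : ℝ) + 1) * Real.Gamma ((n : ℝ) - k + β + 1)))) *
      (Polynomial.C (2⁻¹ : ℝ) * (Polynomial.X - 1)) ^ k *
      (Polynomial.C (2⁻¹ : ℝ) * (Polynomial.X + 1)) ^ (n - k)

/-- The squared Jacobi norm `‖P_n^{(α,β)}‖²`. -/
noncomputable def jacobiNormSq (α β : ℝ) (n : ℕ) : ℝ :=
  ∫ x in (-1 : ℝ)..1, (jacobiP α β n).eval x ^ 2 * (1 - x) ^ α * (1 + x) ^ β

/-- The kernel `K_n^{(j,k)}(x,y)`. -/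
noncomputable def kernK (α β : ℝ) (j k n : ℕ) (x y : ℝ) : ℝ :=
  ∑ i ∈ Finset.range (n + 1),
    (Polynomial.derivative^[j] (jacobiP α β i)).eval x *
      (Polynomial.derivative^[k] (jacobiP α β i)).eval y / jacobiNormSq α β i

/-- The kernel `K_n^{(j,0)}(1,·)` as a polynomial. -/
noncomputable def kernKPoly (α β : ℝ) (j n : ℕ) : Polynomial ℝ :=
  ∑ i ∈ Finset.range (n + 1),
    Polynomial.C ((Polynomial.derivative^[j] (jacobiP α β i)).eval 1 / jacobiNormSq α β i) *
      jacobiP α β i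

/-- The varying Sobolev inner product `(f,g)_{S,n}` with mass `m`. -/
noncomputable def sobInner (α β : ℝ) (j : ℕ) (m : ℝ) (f g : Polynomial ℝ) : ℝ :=
  (∫ x in (-1 : ℝ)..1, f.eval x * g.eval x * (1 - x) ^ α * (1 + x) ^ β) +
    m * (Polynomial.derivative^[j] f).eval 1 * (Polynomial.derivative^[j] g).eval 1

/-- The Jacobi–Sobolev orthogonal polynomial `Q_n`. -/
noncomputable def sobQ (α β : ℝ) (j : ℕ) (Ms : ℕ → ℝ) (n : ℕ) : Polynomial ℝ :=
  jacobiP α β n -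
    Polynomial.C (Ms n * (Polynomial.derivative^[j] (jacobiP α β n)).eval 1 /
        (1 + Ms n * kernK α β j j (n - 1) 1 1)) *
      kernKPoly α β j (n - 1)

private lemma term_eval (a : ℝ) (m l k : ℕ) (hkl : k ≤ l) (hml : m ≤ l) :
    (Polynomial.derivative^[k] (Polynomial.C a * (Polynomial.C (2⁻¹ : ℝ) * (Polynomial.X - 1)) ^ m *
      (Polynomial.C (2⁻¹ : ℝ) * (Polynomial.X + 1)) ^ (l - m))).eval 1 =
    if m ≤ k then a * 2⁻¹ ^ l * (k.choose m) * (m.factorial) * ((l - m).descFactorial (k - m)) * 2 ^ (l - k)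
    else 0 := by
  have h1 : Polynomial.C a * (Polynomial.C (2⁻¹ : ℝ) * (Polynomial.X - 1)) ^ m *
      (Polynomial.C (2⁻¹ : ℝ) * (Polynomial.X + 1)) ^ (l - m)
      = Polynomial.C (a * 2⁻¹ ^ m * 2⁻¹ ^ (l - m)) *
        ((Polynomial.X - Polynomial.C 1) ^ m * (Polynomial.X + Polynomial.C 1) ^ (l - m)) := by
    simp only [mul_pow, ← Polynomial.C_pow, Polynomial.C_1, map_mul]
    ring
  rw [h1, Polynomial.iterate_derivative_C_mul, Polynomial.eval_mul, Polynomial.eval_C,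
    Polynomial.iterate_derivative_mul, Polynomial.eval_finset_sum]
  have h2 : ∀ j ∈ range (k + 1),
      (Polynomial.eval 1 ((k.choose j) • (Polynomial.derivative^[k - j] ((Polynomial.X - Polynomial.C (1:ℝ)) ^ m) *
        Polynomial.derivative^[j] ((Polynomial.X + Polynomial.C (1:ℝ)) ^ (l - m)))))
      = (k.choose j : ℝ) * ((m.descFactorial (k - j)) * (0:ℝ) ^ (m - (k - j))) *
        (((l - m).descFactorial j) * 2 ^ (l - m - j)) := by
    intro j _
    rw [Polynomial.iterate_derivative_X_sub_pow, Polynomial.iterate_derivative_X_add_pow]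
    simp only [nsmul_eq_mul, Polynomial.eval_mul, Polynomial.eval_natCast, Polynomial.eval_pow,
      Polynomial.eval_sub, Polynomial.eval_add, Polynomial.eval_X, Polynomial.eval_one,
      Nat.cast_mul, Polynomial.eval_smul, smul_eq_mul]
    norm_num
    ring
  rw [Finset.sum_congr rfl h2]
  by_cases hmk : m ≤ k
  · rw [if_pos hmk, Finset.sum_eq_single (k - m)]
    · have e1 : k - (k - m) = m := by omega
      have e2 : l - m - (k - m) = l - k := by omega
      have e3 : m + (l - m) = l := by omega
      rw [e1, e2, Nat.descFactorial_self, Nat.sub_self, pow_zero, Nat.choose_symm hmk]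
      rw [mul_one, mul_assoc a, ← pow_add, e3]
      ring
    · intro j hj hne
      have hj' := Finset.mem_range.1 hj
      rcases lt_or_ge (k - j) m with h | h
      · rw [zero_pow (by omega)]; ring
      · rcases eq_or_lt_of_le h with h' | h'
        · exact absurd (by omega : j = k - m) hne
        · rw [Nat.descFactorial_eq_zero_iff_lt.2 h']; push_cast; ring
    · intro h; exact absurd (Finset.mem_range.2 (by omega)) h
  · rw [if_neg hmk]
    have : ∀ j ∈ range (k + 1), (k.choose j : ℝ) * ((m.descFactorial (k - j)) * (0:ℝ) ^ (m - (k - j))) *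
        (((l - m).descFactorial j) * 2 ^ (l - m - j)) = 0 := by
      intro j hj
      rw [zero_pow (by omega)]; ring
    rw [Finset.sum_congr rfl this, Finset.sum_const_zero, mul_zero]

private lemma deriv_eval (α β : ℝ) (hα : -1 < α) (hβ : -1 < β) (k n : ℕ) (hkn : k ≤ n) :
    (Polynomial.derivative^[k] (jacobiP α β n)).eval 1 =
    (2:ℝ)⁻¹ ^ k / (n - k).factorial * ∑ m ∈ Finset.range (k + 1),
      Real.Gamma (n + α + 1) / Real.Gamma (α + m + 1) *
      (Real.Gamma (n + β + 1) / Real.Gamma ((n:ℝ) - m + β + 1)) *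
      (k.factorial / (m.factorial * (k - m).factorial)) := by
  rw [jacobiP, Polynomial.iterate_derivative_sum, Polynomial.eval_finset_sum]
  have h2 : ∀ m ∈ range (n + 1),
      (Polynomial.derivative^[k] (Polynomial.C (Real.Gamma (n + α + 1) / (Real.Gamma ((n : ℝ) - m + 1) * Real.Gamma (α + m + 1)) *
        (Real.Gamma (n + β + 1) / (Real.Gamma ((m : ℝ) + 1) * Real.Gamma ((n : ℝ) - m + β + 1)))) *
        (Polynomial.C (2⁻¹ : ℝ) * (Polynomial.X - 1)) ^ m *
        (Polynomial.C (2⁻¹ : ℝ) * (Polynomial.X + 1)) ^ (n - m))).eval 1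
      = if m ≤ k then (Real.Gamma (n + α + 1) / (Real.Gamma ((n : ℝ) - m + 1) * Real.Gamma (α + m + 1)) *
        (Real.Gamma (n + β + 1) / (Real.Gamma ((m : ℝ) + 1) * Real.Gamma ((n : ℝ) - m + β + 1)))) * 2⁻¹ ^ n *
        (k.choose m) * (m.factorial) * ((n - m).descFactorial (k - m)) * 2 ^ (n - k) else 0 := by
    intro m hm
    have hm' := Finset.mem_range.1 hm
    exact term_eval _ m n k hkn (by omega)
  rw [Finset.sum_congr rfl h2, ← Finset.sum_subset
    (Finset.range_subset_range.2 (by omega : k + 1 ≤ n + 1))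
    (fun x hx hnx => by rw [if_neg (by simp at hx hnx ⊢; omega)]), Finset.mul_sum]
  refine Finset.sum_congr rfl fun m hm => ?_
  have hmk : m ≤ k := by simpa [Nat.lt_succ_iff] using hm
  rw [if_pos hmk]
  have hmn : m ≤ n := le_trans hmk hkn
  -- Gamma of nat casts
  have g1 : Real.Gamma ((n : ℝ) - m + 1) = (n - m).factorial := by
    rw [show (n:ℝ) - m = ((n - m : ℕ) : ℝ) by push_cast [Nat.cast_sub hmn]; ring]
    exact_mod_cast Real.Gamma_nat_eq_factorial (n - m)
  have g2 : Real.Gamma ((m : ℝ) + 1) = m.factorial := by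
    exact_mod_cast Real.Gamma_nat_eq_factorial m
  have g3 : (((n - m).descFactorial (k - m)) : ℝ) = (n - m).factorial / (n - k).factorial := by
    have := Nat.factorial_mul_descFactorial (show k - m ≤ n - m by omega)
    rw [show n - m - (k - m) = n - k by omega] at this
    field_simp
    rw [mul_comm] at this
    exact_mod_cast congrArg (Nat.cast (R := ℝ)) this
  have g4 : ((k.choose m) : ℝ) = k.factorial / (m.factorial * (k - m).factorial) := by
    rw [eq_div_iff (by positivity), ← mul_assoc]
    exact_mod_cast congrArg (Nat.cast (R := ℝ)) (Nat.choose_mul_factorial_mul_factorial hmk)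
  have g5 : (2:ℝ)⁻¹ ^ n * 2 ^ (n - k) = 2⁻¹ ^ k := by
    have h : (2:ℝ) ^ (n - k) * 2 ^ k = 2 ^ n := by rw [← pow_add]; congr 1; omega
    rw [inv_pow, inv_pow, ← h, mul_inv, mul_comm, ← mul_assoc,
      mul_inv_cancel₀ (pow_ne_zero _ two_ne_zero), one_mul]
  have hΓa : Real.Gamma (α + m + 1) ≠ 0 := ne_of_gt (Real.Gamma_pos_of_pos (by push_cast; linarith))
  have hΓb : Real.Gamma ((n:ℝ) - m + β + 1) ≠ 0 := by
    apply ne_of_gt (Real.Gamma_pos_of_pos _)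
    have : (m:ℝ) ≤ n := by exact_mod_cast hmn
    linarith
  have hf1 : ((n - m).factorial : ℝ) ≠ 0 := by positivity
  have hf2 : ((n - k).factorial : ℝ) ≠ 0 := by positivity
  have hf3 : ((m).factorial : ℝ) ≠ 0 := by positivity
  have hf4 : ((k - m).factorial : ℝ) ≠ 0 := by positivity
  rw [g1, g2, g3, g4]
  rw [show ∀ A B C D : ℝ, A * 2⁻¹^n * B * C * D * 2^(n-k) = (2⁻¹^n * 2^(n-k)) * (A * B * C * D)
    from by intros; ring, g5]
  field_simp

private lemma gamma_prod (x : ℝ) (m : ℕ) (h : 0 < x - m) :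
    Real.Gamma (x + 1) = (∏ j ∈ Finset.range m, (x - j)) * Real.Gamma (x + 1 - m) := by
  induction m with
  | zero => simp
  | succ m ih =>
    have hm : 0 < x - m := by push_cast at h ⊢; linarith
    rw [ih hm, Finset.prod_range_succ]
    have : Real.Gamma (x + 1 - m) = (x - m) * Real.Gamma (x + 1 - (m + 1)) := by
      rw [show x + 1 - (m:ℝ) = (x - m) + 1 by ring, Real.Gamma_add_one (ne_of_gt hm)]
      congr 1
      push_cast; ring
    rw [this]; push_cast; ring

noncomputable def Usum (α β : ℝ) (k n : ℕ) : ℝ :=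
  ∑ m ∈ Finset.range (k + 1), (∏ j ∈ Finset.range m, ((n:ℝ) + β - j)) /
    (Real.Gamma (α + m + 1) * m.factorial * (k - m).factorial)

private lemma deriv_eval_closed (α β : ℝ) (hα : -1 < α) (hβ : -1 < β) (k n : ℕ) (h : k + 1 ≤ n) :
    (Polynomial.derivative^[k] (jacobiP α β n)).eval 1 =
    (2:ℝ)⁻¹ ^ k * k.factorial / (n - k).factorial * Real.Gamma (n + α + 1) * Usum α β k n := by
  rw [deriv_eval α β hα hβ k n (by omega), Usum, Finset.mul_sum, Finset.mul_sum]
  refine Finset.sum_congr rfl fun m hm => ?_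
  have hmk : m ≤ k := by have := Finset.mem_range.1 hm; omega
  have hn1 : (1:ℝ) ≤ (n:ℝ) - m := by
    have : ((m:ℝ)) + 1 ≤ n := by exact_mod_cast Nat.succ_le_of_lt (by omega)
    linarith
  have key : Real.Gamma ((n:ℝ) + β + 1) =
      (∏ j ∈ Finset.range m, ((n:ℝ) + β - j)) * Real.Gamma ((n:ℝ) - m + β + 1) := by
    rw [gamma_prod ((n:ℝ) + β) m (by linarith)]
    congr 1
    ring
  rw [key]
  have hΓb : Real.Gamma ((n:ℝ) - m + β + 1) ≠ 0 :=
    ne_of_gt (Real.Gamma_pos_of_pos (by linarith))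
  have hΓa : Real.Gamma (α + m + 1) ≠ 0 :=
    ne_of_gt (Real.Gamma_pos_of_pos (by push_cast; linarith [Nat.cast_nonneg (α := ℝ) m]))
  have hf2 : ((n - k).factorial : ℝ) ≠ 0 := by positivity
  have hf3 : ((m).factorial : ℝ) ≠ 0 := by positivity
  have hf4 : ((k - m).factorial : ℝ) ≠ 0 := by positivity
  field_simp

lemma aux_lin (c : ℝ) : Tendsto (fun n : ℕ => ((n:ℝ) + c) / n) atTop (𝓝 1) := by
  have h : (fun n : ℕ => ((n:ℝ) + c) / n) =ᶠ[atTop] fun n : ℕ => 1 + c / n := by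
    filter_upwards [eventually_ge_atTop 1] with n hn
    have hn0 : (n:ℝ) ≠ 0 := by
      have : (1:ℝ) ≤ n := by exact_mod_cast hn
      linarith
    field_simp
  rw [tendsto_congr' h]
  simpa using tendsto_const_nhds.add (tendsto_const_div_atTop_nhds_zero_nat c)

lemma aux_prod (β : ℝ) (m : ℕ) (c : ℕ → ℝ) :
    Tendsto (fun n : ℕ => ∏ j ∈ Finset.range m, (((n:ℝ) + c j) / n)) atTop (𝓝 1) := by
  have h := tendsto_finset_prod (f := fun (j : ℕ) (n : ℕ) => ((n:ℝ) + c j) / n)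
    (x := atTop) (a := fun _ => 1) (Finset.range m) (fun j _ => aux_lin (c j))
  simpa using h

lemma U_tendsto (α β : ℝ) (hα : -1 < α) (k : ℕ) :
    Tendsto (fun n : ℕ => Usum α β k n / (n:ℝ) ^ k) atTop
      (𝓝 (1 / (Real.Gamma (α + k + 1) * k.factorial))) := by
  -- rewrite as a finite sum of terms, each with its own limit
  have hptwise : (fun n : ℕ => Usum α β k n / (n:ℝ) ^ k) =ᶠ[atTop]
      (fun n : ℕ => ∑ m ∈ Finset.range (k + 1),
        (∏ j ∈ Finset.range m, (((n:ℝ) + (β - j)) / n)) * (1 / (n:ℝ) ^ (k - m)) /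
          (Real.Gamma (α + m + 1) * m.factorial * (k - m).factorial)) := by
    filter_upwards [eventually_ge_atTop 1] with n hn
    have hn0 : (n:ℝ) ≠ 0 := by
      have : (1:ℝ) ≤ n := by exact_mod_cast hn
      linarith
    rw [Usum, Finset.sum_div]
    refine Finset.sum_congr rfl fun m hm => ?_
    have hmk : m ≤ k := by have := Finset.mem_range.1 hm; omega
    have hprod : ∏ j ∈ Finset.range m, (((n:ℝ) + (β - j)) / n)
        = (∏ j ∈ Finset.range m, ((n:ℝ) + β - j)) / (n:ℝ) ^ m := by
      rw [Finset.prod_div_distrib, Finset.prod_const, Finset.card_range]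
      congr 1
      exact Finset.prod_congr rfl fun j _ => by ring
    rw [hprod]
    have hpow : (n:ℝ) ^ m * (n:ℝ) ^ (k - m) = (n:ℝ) ^ k := by
      rw [← pow_add]; congr 1; omega
    field_simp
    ring_nf
    rw [← hpow]
  rw [tendsto_congr' hptwise]
  have hlim : (1 : ℝ) / (Real.Gamma (α + k + 1) * k.factorial) =
      ∑ m ∈ Finset.range (k + 1), (if m = k then
        (1:ℝ) / (Real.Gamma (α + m + 1) * m.factorial * (k - m).factorial) else 0) := by
    rw [Finset.sum_ite_eq' (Finset.range (k+1)) k]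
    simp
  rw [hlim]
  apply tendsto_finset_sum
  intro m hm
  have hmk : m ≤ k := by have := Finset.mem_range.1 hm; omega
  rcases eq_or_lt_of_le hmk with rfl | hlt
  · simp only [if_pos rfl, Nat.sub_self, pow_zero, div_one, mul_one, Nat.factorial_zero,
      Nat.cast_one]
    have h := (aux_prod β m (fun j => β - j)).div_const
      (Real.Gamma (α + m + 1) * m.factorial)
    simpa using h
  · rw [if_neg (by omega)]
    have h2 : Tendsto (fun n : ℕ => 1 / (n:ℝ) ^ (k - m)) atTop (𝓝 0) := by
      simp only [one_div]
      apply Tendsto.inv_tendsto_atTop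
      exact Tendsto.comp (tendsto_pow_atTop (by omega)) tendsto_natCast_atTop_atTop
    have := ((aux_prod β m (fun j => β - j)).mul h2).div_const
      (Real.Gamma (α + m + 1) * m.factorial * (k - m).factorial)
    simpa using this

private lemma ratio_helper (a b c g p u v x y : ℝ) (hc : c ≠ 0) (hg : g ≠ 0) (hx : x ≠ 0) (hy : y ≠ 0)
    (hb : b ≠ 0) :
    (a / c * (p * g) * u) / (b / c * g * v) = (a / b) * (p * x / y) * ((u / x) / (v / y)) := by
  rcases eq_or_ne v 0 with rfl | hv
  · simp
  · field_simp

/-- limit of `(P_{n-i}^{(α+2i,β)})^{(k-i)}(1)/(P_n^{(α,β)})^{(k)}(1)`. -/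
theorem jacobiP_deriv_ratio (α β : ℝ) (hα : -1 < α) (hβ : -1 < β) (i k : ℕ) (hik : i ≤ k) :
    Filter.Tendsto
      (fun n : ℕ => (Polynomial.derivative^[k - i] (jacobiP (α + 2 * i) β (n - i))).eval 1 /
        (Polynomial.derivative^[k] (jacobiP α β n)).eval 1)
      Filter.atTop
      (nhds ((2 : ℝ) ^ i * Real.Gamma (α + k + 1) / Real.Gamma (α + i + k + 1))) := by
  obtain ⟨d, rfl⟩ : ∃ d, k = i + d := ⟨k - i, by omega⟩
  have hα2 : (-1:ℝ) < α + 2 * i := by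
    have : (0:ℝ) ≤ (i:ℝ) := Nat.cast_nonneg i
    linarith
  -- the factored function
  set f : ℕ → ℝ := fun n =>
    ((2:ℝ) ^ i * ((d.factorial : ℝ) / ((i + d).factorial : ℝ))) *
    ((∏ j ∈ Finset.range i, ((n:ℝ) + (α + 1 + j))) * (((n - i : ℕ):ℝ)) ^ d / (n:ℝ) ^ (i + d)) *
    ((Usum (α + 2 * i) β d (n - i) / ((n - i : ℕ):ℝ) ^ d) /
      (Usum α β (i + d) n / (n:ℝ) ^ (i + d))) with hf
  -- limits of the pieces
  have hΓ1pos : (0:ℝ) < Real.Gamma (α + 2 * i + d + 1) := by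
    apply Real.Gamma_pos_of_pos
    have h1 := Nat.cast_nonneg (α := ℝ) i
    have h2 := Nat.cast_nonneg (α := ℝ) d
    linarith
  have hΓ2pos : (0:ℝ) < Real.Gamma (α + (i + d : ℕ) + 1) := by
    apply Real.Gamma_pos_of_pos
    have h1 := Nat.cast_nonneg (α := ℝ) (i + d)
    linarith
  have h3 : Tendsto (fun n : ℕ =>
      (∏ j ∈ Finset.range i, ((n:ℝ) + (α + 1 + j))) * (((n - i : ℕ):ℝ)) ^ d / (n:ℝ) ^ (i + d))
      atTop (𝓝 1) := by
    have heq : (fun n : ℕ =>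
        (∏ j ∈ Finset.range i, ((n:ℝ) + (α + 1 + j))) * (((n - i : ℕ):ℝ)) ^ d / (n:ℝ) ^ (i + d))
        =ᶠ[atTop] (fun n : ℕ =>
        (∏ j ∈ Finset.range i, (((n:ℝ) + (α + 1 + j)) / n)) * (((n:ℝ) + (-(i:ℝ))) / n) ^ d) := by
      filter_upwards [eventually_ge_atTop (i + 1)] with n hn
      have hn0 : (n:ℝ) ≠ 0 := by
        have : (1:ℝ) ≤ (n:ℝ) := by exact_mod_cast Nat.one_le_iff_ne_zero.2 (by omega)
        linarith
      have hcast : ((n - i : ℕ):ℝ) = (n:ℝ) + (-(i:ℝ)) := by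
        push_cast [Nat.cast_sub (by omega : i ≤ n)]; ring
      rw [hcast, pow_add, Finset.prod_div_distrib, Finset.prod_const, Finset.card_range, div_pow]
      field_simp
      try ring
    rw [tendsto_congr' heq]
    have := (aux_prod β i (fun j => α + 1 + j)).mul ((aux_lin (-(i:ℝ))).pow d)
    simpa using this
  have h4 : Tendsto (fun n : ℕ => Usum (α + 2 * i) β d (n - i) / ((n - i : ℕ):ℝ) ^ d) atTop
      (𝓝 (1 / (Real.Gamma (α + 2 * i + d + 1) * d.factorial))) := by
    have := (U_tendsto (α + 2 * i) β hα2 d).comp (tendsto_sub_atTop_nat i)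
    simpa [Function.comp_def] using this
  have h5 := U_tendsto α β hα (i + d)
  have h45 : Tendsto (fun n : ℕ =>
      (Usum (α + 2 * i) β d (n - i) / ((n - i : ℕ):ℝ) ^ d) /
        (Usum α β (i + d) n / (n:ℝ) ^ (i + d))) atTop
      (𝓝 ((1 / (Real.Gamma (α + 2 * i + d + 1) * d.factorial)) /
        (1 / (Real.Gamma (α + (i + d : ℕ) + 1) * (i + d).factorial)))) := by
    apply h4.div h5
    positivity
  have hftend : Tendsto f atTop (𝓝
      (((2:ℝ) ^ i * ((d.factorial : ℝ) / ((i + d).factorial : ℝ))) * 1 *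
      ((1 / (Real.Gamma (α + 2 * i + d + 1) * d.factorial)) /
        (1 / (Real.Gamma (α + (i + d : ℕ) + 1) * (i + d).factorial))))) :=
    (tendsto_const_nhds.mul h3).mul h45
  -- the eventual equality
  have heq2 : f =ᶠ[atTop] (fun n : ℕ =>
      (Polynomial.derivative^[i + d - i] (jacobiP (α + 2 * i) β (n - i))).eval 1 /
        (Polynomial.derivative^[i + d] (jacobiP α β n)).eval 1) := by
    filter_upwards [eventually_ge_atTop (i + d + 1)] with n hn
    have hin : i ≤ n := by omega
    have hnum : (Polynomial.derivative^[i + d - i] (jacobiP (α + 2 * i) β (n - i))).eval 1 =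
        (2:ℝ)⁻¹ ^ d * d.factorial / ((n - (i + d)).factorial) *
          Real.Gamma (((n - i : ℕ):ℝ) + (α + 2 * i) + 1) * Usum (α + 2 * i) β d (n - i) := by
      rw [Nat.add_sub_cancel_left, deriv_eval_closed (α + 2 * i) β hα2 hβ d (n - i) (by omega)]
      rw [show (n - i) - d = n - (i + d) from by omega]
    have hden : (Polynomial.derivative^[i + d] (jacobiP α β n)).eval 1 =
        (2:ℝ)⁻¹ ^ (i + d) * (i + d).factorial / ((n - (i + d)).factorial) *
          Real.Gamma ((n:ℝ) + α + 1) * Usum α β (i + d) n :=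
      deriv_eval_closed α β hα hβ (i + d) n (by omega)
    have hΓsplit : Real.Gamma (((n - i : ℕ):ℝ) + (α + 2 * i) + 1) =
        (∏ j ∈ Finset.range i, ((n:ℝ) + (α + 1 + j))) * Real.Gamma ((n:ℝ) + α + 1) := by
      have hcast : ((n - i : ℕ):ℝ) = (n:ℝ) - i := by
        push_cast [Nat.cast_sub hin]; ring
      rw [hcast, show (n:ℝ) - i + (α + 2 * i) + 1 = ((n:ℝ) + α + i) + 1 from by push_cast; ring,
        gamma_prod ((n:ℝ) + α + i) i (by
          have h1 : (1:ℝ) ≤ (n:ℝ) := by exact_mod_cast Nat.one_le_iff_ne_zero.2 (by omega)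
          have : ((n:ℝ) + α + i) - i = (n:ℝ) + α := by ring
          rw [this]; linarith)]
      congr 1
      · rw [← Finset.prod_range_reflect (fun j => (n:ℝ) + (α + 1 + j)) i]
        refine Finset.prod_congr rfl fun j hj => ?_
        have hj' := Finset.mem_range.1 hj
        have : ((i - 1 - j : ℕ):ℝ) = (i:ℝ) - 1 - j := by
          push_cast [Nat.cast_sub (by omega : j ≤ i - 1), Nat.cast_sub (by omega : 1 ≤ i)]
          ring
        rw [this]; ring
      · congr 1; push_cast; ring
    have hn1 : (1:ℝ) ≤ (n:ℝ) := by exact_mod_cast Nat.one_le_iff_ne_zero.2 (by omega)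
    have hc : ((n - (i + d)).factorial : ℝ) ≠ 0 := by positivity
    have hg : Real.Gamma ((n:ℝ) + α + 1) ≠ 0 :=
      ne_of_gt (Real.Gamma_pos_of_pos (by linarith))
    have hx : (((n - i : ℕ):ℝ)) ^ d ≠ 0 := by
      have : (0:ℝ) < ((n - i : ℕ):ℝ) := by exact_mod_cast Nat.pos_of_ne_zero (by omega)
      positivity
    have hy : ((n:ℝ)) ^ (i + d) ≠ 0 := by positivity
    have hb : (2:ℝ)⁻¹ ^ (i + d) * ((i + d).factorial : ℝ) ≠ 0 := by positivity
    have hab : ((2:ℝ)⁻¹ ^ d * (d.factorial : ℝ)) / ((2:ℝ)⁻¹ ^ (i + d) * ((i + d).factorial : ℝ))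
        = (2:ℝ) ^ i * ((d.factorial : ℝ) / ((i + d).factorial : ℝ)) := by
      rw [pow_add]
      have h2 : ((i + d).factorial : ℝ) ≠ 0 := by positivity
      field_simp
      rw [← mul_pow]; norm_num
    rw [hnum, hden, hΓsplit,
      ratio_helper _ _ _ _ _ _ _ ((((n - i : ℕ):ℝ)) ^ d) (((n:ℝ)) ^ (i + d)) hc hg hx hy hb,
      hab]
  exact Tendsto.congr' heq2 (by
    convert hftend using 2
    have hΓ2 : Real.Gamma (α + (i + d : ℕ) + 1) = Real.Gamma (α + (↑(i + d) : ℝ) + 1) := rfl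
    have hΓ1' : Real.Gamma (α + ↑i + ↑(i + d) + 1) = Real.Gamma (α + 2 * i + d + 1) := by
      congr 1; push_cast; ring
    rw [hΓ1']
    have hd : (d.factorial : ℝ) ≠ 0 := by positivity
    have hid : ((i + d).factorial : ℝ) ≠ 0 := by positivity
    push_cast
    field_simp)
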